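/- Let A be a commutative algebra over ℂ, let n ≥ 1 be an integer, F, a ∈ A, and let ζ ∈ ℂ be a primitive n-th root of unity. Let B := A[u, v]/(uv − F, u^n + v^n − 2a), and let σ be the A-algebra automorphism of B determined by σ(u) = ζ·u, σ(v) = ζ⁻¹·v. Then the subalgebra B^σ of σ-invariant elements of B is a free A-module with basis {1, u^n − v^n}, and in B one has the identity (u^n − v^n)² = 4·(a² − F^n). -/

import Mathlib

noncomputable section

/-- The ideal `(uv − F, uⁿ + vⁿ − 2a)` in `A[u, v]`. -/
def dihedralIdeal (A : Type) [CommRing A] (n : ℕ) (F a : A) :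
    Ideal (MvPolynomial (Fin 2) A) :=
  Ideal.span {MvPolynomial.X 0 * MvPolynomial.X 1 - MvPolynomial.C F,
    MvPolynomial.X 0 ^ n + MvPolynomial.X 1 ^ n - MvPolynomial.C (2 * a)}

/-- The ring `B = A[u, v]/(uv − F, uⁿ + vⁿ − 2a)`, the coordinate ring of the simple
dihedral cover of `Spec A` determined by the data `F` and `a`. -/
abbrev DihedralCoverRing (A : Type) [CommRing A] (n : ℕ) (F a : A) : Type :=
  MvPolynomial (Fin 2) A ⧸ dihedralIdeal A n F a

/-- The image `u` of the first variable in `B`. -/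
def uElt (A : Type) [CommRing A] (n : ℕ) (F a : A) : DihedralCoverRing A n F a :=
  Ideal.Quotient.mk _ (MvPolynomial.X 0)

/-- The image `v` of the second variable in `B`. -/
def vElt (A : Type) [CommRing A] (n : ℕ) (F a : A) : DihedralCoverRing A n F a :=
  Ideal.Quotient.mk _ (MvPolynomial.X 1)

/-- The subalgebra of `σ`-invariant elements of `B`. -/
def fixedSubalgebra (A : Type) [CommRing A] (n : ℕ) (F a : A)
    (σ : DihedralCoverRing A n F a ≃ₐ[A] DihedralCoverRing A n F a) :
    Subalgebra A (DihedralCoverRing A n F a) :=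
  AlgHom.equalizer ((σ : DihedralCoverRing A n F a ≃ₐ[A] DihedralCoverRing A n F a) :
      DihedralCoverRing A n F a →ₐ[A] DihedralCoverRing A n F a)
    ((AlgEquiv.refl : DihedralCoverRing A n F a ≃ₐ[A] DihedralCoverRing A n F a) :
      DihedralCoverRing A n F a →ₐ[A] DihedralCoverRing A n F a)

namespace DihedralAux

variable {A : Type} [CommRing A]

def gam (F a : A) (n : ℕ) : ℕ → A × A
  | 0 => (1, 0)
  | q + 1 => (-(F ^ n) * (gam F a n q).2, (gam F a n q).1 + 2 * a * (gam F a n q).2)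

def cU (F a : A) (n : ℕ) (k : ℕ) : A × A :=
  if n ∣ k then ((gam F a n (k / n + 1)).2, -(gam F a n (k / n)).2) else 0

def cV (F a : A) (n : ℕ) (k : ℕ) : A × A :=
  if n ∣ k then gam F a n (k / n) else 0

def mu (F a : A) (n : ℕ) (i j : ℕ) : A × A :=
  if j ≤ i then F ^ j • cU F a n (i - j) else F ^ i • cV F a n (j - i)

variable {F a : A} {n : ℕ}

lemma not_dvd_of_lt {k : ℕ} (h0 : 0 < k) (h1 : k < n) : ¬ n ∣ k :=
  fun h => absurd (Nat.le_of_dvd h0 h) (not_le.2 h1)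

lemma cU_rec (hn : 0 < n) {k : ℕ} (hk : n ≤ k) :
    cU F a n (k + n) + F ^ n • cU F a n (k - n) = (2 * a) • cU F a n k := by
  by_cases hd : n ∣ k
  · obtain ⟨q, rfl⟩ := hd
    have hq : 1 ≤ q := by
      rcases Nat.eq_zero_or_pos q with h | h
      · rw [h, mul_zero] at hk; omega
      · exact h
    obtain ⟨q', rfl⟩ : ∃ q', q = q' + 1 := ⟨q - 1, by omega⟩
    have e1 : n * (q' + 1) + n = n * (q' + 2) := by ring
    have e2 : n * (q' + 1) - n = n * q' := by
      have : n * (q' + 1) = n * q' + n := by ring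
      omega
    rw [e1, e2]
    have d1 : n ∣ n * (q' + 2) := ⟨q' + 2, rfl⟩
    have d2 : n ∣ n * q' := ⟨q', rfl⟩
    have d3 : n ∣ n * (q' + 1) := ⟨q' + 1, rfl⟩
    simp only [cU, if_pos d1, if_pos d2, if_pos d3,
      Nat.mul_div_cancel_left _ hn]
    apply Prod.ext
    · simp only [Prod.fst_add, Prod.smul_fst, smul_eq_mul, Prod.smul_snd]
      simp only [gam]; ring
    · simp only [Prod.snd_add, Prod.smul_snd, smul_eq_mul]
      simp only [gam]; ring
  · have d1 : ¬ n ∣ k + n := fun h => hd (by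
      have := Nat.dvd_sub h (dvd_refl n)
      simpa using this)
    have d2 : ¬ n ∣ k - n := fun h => hd (by
      have : n ∣ (k - n) + n := Nat.dvd_add h (dvd_refl n)
      rwa [Nat.sub_add_cancel hk] at this)
    simp only [cU, if_neg d1, if_neg d2, if_neg hd, smul_zero, add_zero]

lemma cV_rec (hn : 0 < n) {k : ℕ} (hk : n ≤ k) :
    cV F a n (k + n) + F ^ n • cV F a n (k - n) = (2 * a) • cV F a n k := by
  by_cases hd : n ∣ k
  · obtain ⟨q, rfl⟩ := hd
    have hq : 1 ≤ q := by
      rcases Nat.eq_zero_or_pos q with h | h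
      · rw [h, mul_zero] at hk; omega
      · exact h
    obtain ⟨q', rfl⟩ : ∃ q', q = q' + 1 := ⟨q - 1, by omega⟩
    have e1 : n * (q' + 1) + n = n * (q' + 2) := by ring
    have e2 : n * (q' + 1) - n = n * q' := by
      have : n * (q' + 1) = n * q' + n := by ring
      omega
    rw [e1, e2]
    have d1 : n ∣ n * (q' + 2) := ⟨q' + 2, rfl⟩
    have d2 : n ∣ n * q' := ⟨q', rfl⟩
    have d3 : n ∣ n * (q' + 1) := ⟨q' + 1, rfl⟩
    simp only [cV, if_pos d1, if_pos d2, if_pos d3,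
      Nat.mul_div_cancel_left _ hn]
    apply Prod.ext
    · simp only [Prod.fst_add, Prod.smul_fst, smul_eq_mul]
      simp only [gam]; ring
    · simp only [Prod.snd_add, Prod.smul_snd, smul_eq_mul]
      simp only [gam]; ring
  · have d1 : ¬ n ∣ k + n := fun h => hd (by
      have := Nat.dvd_sub h (dvd_refl n)
      simpa using this)
    have d2 : ¬ n ∣ k - n := fun h => hd (by
      have : n ∣ (k - n) + n := Nat.dvd_add h (dvd_refl n)
      rwa [Nat.sub_add_cancel hk] at this)
    simp only [cV, if_neg d1, if_neg d2, if_neg hd, smul_zero, add_zero]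

lemma cU_zero : cU F a n 0 = (1, 0) := by
  simp [cU, gam, Nat.zero_div]

lemma cV_zero : cV F a n 0 = (1, 0) := by
  simp [cV, gam, Nat.zero_div]

lemma cU_n (hn : 0 < n) : cU F a n n = (2 * a, -1) := by
  have : n ∣ n := dvd_refl n
  simp only [cU, if_pos this, Nat.div_self hn]
  simp [gam]

lemma cV_n (hn : 0 < n) : cV F a n n = (0, 1) := by
  have : n ∣ n := dvd_refl n
  simp only [cV, if_pos this, Nat.div_self hn]
  simp [gam]

lemma cV_2n (hn : 0 < n) : cV F a n (n + n) = (-(F ^ n), 2 * a) := by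
  have d : n ∣ n + n := ⟨2, by ring⟩
  have e : (n + n) / n = 2 := by rw [Nat.add_div_right _ hn, Nat.div_self hn]
  simp only [cV, if_pos d, e]
  simp [gam]

lemma cU_rec_small (hn : 0 < n) {k : ℕ} (hk : k < n) :
    cU F a n (k + n) + F ^ k • cV F a n (n - k) = (2 * a) • cU F a n k := by
  rcases Nat.eq_zero_or_pos k with h | h
  · subst h
    simp only [Nat.zero_add, Nat.sub_zero, pow_zero, one_smul, cU_zero, cU_n hn, cV_n hn]
    apply Prod.ext <;> simp <;> ring
  · have d1 : ¬ n ∣ k + n := fun hd => (not_dvd_of_lt h hk) (by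
      have := Nat.dvd_sub hd (dvd_refl n)
      simpa using this)
    have d2 : ¬ n ∣ n - k := not_dvd_of_lt (by omega) (by omega)
    have d3 : ¬ n ∣ k := not_dvd_of_lt h hk
    simp only [cU, cV, if_neg d1, if_neg d2, if_neg d3, smul_zero, add_zero]

lemma cV_rec_small (hn : 0 < n) {k : ℕ} (hk : k ≤ n) :
    cV F a n (k + n) + F ^ k • cU F a n (n - k) = (2 * a) • cV F a n k := by
  rcases Nat.eq_zero_or_pos k with h | h
  · subst h
    simp only [Nat.zero_add, Nat.sub_zero, pow_zero, one_smul, cV_zero, cU_n hn, cV_n hn]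
    apply Prod.ext <;> simp <;> ring
  · rcases Nat.lt_or_ge k n with hlt | hge
    · have d1 : ¬ n ∣ k + n := fun hd => (not_dvd_of_lt h hlt) (by
        have := Nat.dvd_sub hd (dvd_refl n)
        simpa using this)
      have d2 : ¬ n ∣ n - k := not_dvd_of_lt (by omega) (by omega)
      have d3 : ¬ n ∣ k := not_dvd_of_lt h hlt
      simp only [cU, cV, if_neg d1, if_neg d2, if_neg d3, smul_zero, add_zero]
    · have hkn : k = n := le_antisymm hk hge
      rw [hkn, Nat.sub_self, cU_zero, cV_2n hn, cV_n hn]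
      apply Prod.ext <;> simp <;> ring

lemma mu_rec1 (i j : ℕ) : mu F a n (i + 1) (j + 1) = F • mu F a n i j := by
  rcases le_or_gt j i with h | h
  · rw [mu, if_pos (by omega), mu, if_pos h]
    have : i + 1 - (j + 1) = i - j := by omega
    rw [this, pow_succ, mul_smul]
    rw [smul_comm]
  · rw [mu, if_neg (by omega), mu, if_neg (by omega)]
    have : j + 1 - (i + 1) = j - i := by omega
    rw [this, pow_succ, mul_smul]
    rw [smul_comm]

lemma mu_rec2 (hn : 0 < n) (i j : ℕ) :
    mu F a n (i + n) j + mu F a n i (j + n) = (2 * a) • mu F a n i j := by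
  rcases le_or_gt j i with h | h
  · rcases le_or_gt (j + n) i with h2 | h2
    · -- k = i - j ≥ n
      rw [mu, if_pos (by omega), mu, if_pos h2, mu, if_pos h]
      have e1 : i + n - j = (i - j) + n := by omega
      have e2 : i - (j + n) = (i - j) - n := by omega
      have e3 : (F : A) ^ (j + n) = F ^ j * F ^ n := by rw [pow_add]
      rw [e1, e2, e3, mul_smul, ← smul_add, cU_rec hn (by omega), smul_comm]
    · -- k = i - j < n
      rw [mu, if_pos (by omega), mu, if_neg (by omega), mu, if_pos h]
      have e1 : i + n - j = (i - j) + n := by omega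
      have e2 : j + n - i = n - (i - j) := by omega
      have e3 : (F : A) ^ i = F ^ j * F ^ (i - j) := by rw [← pow_add]; congr 1; omega
      rw [e1, e2, e3, mul_smul, ← smul_add, cU_rec_small hn (by omega), smul_comm]
  · -- i < j, k = j - i ≥ 1
    rcases le_or_gt (j - i) n with h2 | h2
    · -- k ≤ n
      rw [mu, if_pos (by omega), mu, if_neg (by omega), mu, if_neg (by omega)]
      have e1 : j + n - i = (j - i) + n := by omega
      have e2 : i + n - j = n - (j - i) := by omega
      have e3 : (F : A) ^ j = F ^ i * F ^ (j - i) := by rw [← pow_add]; congr 1; omega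
      rw [e1, e2, e3, mul_smul, add_comm, ← smul_add, cV_rec_small hn h2, smul_comm]
    · -- k > n
      rw [mu, if_neg (by omega), mu, if_neg (by omega), mu, if_neg (by omega)]
      have e1 : j + n - i = (j - i) + n := by omega
      have e2 : j - (i + n) = (j - i) - n := by omega
      have e3 : (F : A) ^ (i + n) = F ^ i * F ^ n := by rw [pow_add]
      rw [e1, e2, e3, mul_smul, add_comm, ← smul_add, cV_rec hn (by omega), smul_comm]

open MvPolynomial in
def lam (F a : A) (n : ℕ) : MvPolynomial (Fin 2) A →ₗ[A] A × A :=
  (MvPolynomial.basisMonomials (Fin 2) A).constr A fun d => mu F a n (d 0) (d 1)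

open MvPolynomial

lemma lam_monomial (F a : A) (n : ℕ) (d : Fin 2 →₀ ℕ) (c : A) :
    lam F a n (monomial d c) = c • mu F a n (d 0) (d 1) := by
  have : (monomial d c : MvPolynomial (Fin 2) A) = c • monomial d 1 := by
    rw [MvPolynomial.smul_monomial, smul_eq_mul, mul_one]
  rw [this, map_smul, lam]
  congr 1
  have := Module.Basis.constr_basis (MvPolynomial.basisMonomials (Fin 2) A) A
    (fun d : Fin 2 →₀ ℕ => mu F a n (d 0) (d 1)) d
  rwa [MvPolynomial.coe_basisMonomials] at this

lemma lam_mul_g1 (F a : A) (n : ℕ) (p : MvPolynomial (Fin 2) A) :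
    lam F a n (p * (X 0 * X 1 - C F)) = 0 := by
  induction p using MvPolynomial.induction_on' with
  | add p q hp hq => rw [add_mul, map_add, hp, hq, add_zero]
  | monomial d c =>
    have hXX : (X 0 * X 1 : MvPolynomial (Fin 2) A)
        = monomial (Finsupp.single 0 1 + Finsupp.single 1 1) 1 := by
      rw [X, X, MvPolynomial.monomial_mul, mul_one]
    rw [mul_sub, hXX, MvPolynomial.monomial_mul, MvPolynomial.C_apply,
      MvPolynomial.monomial_mul, map_sub, lam_monomial, lam_monomial]
    have e0 : ((d + (Finsupp.single 0 1 + Finsupp.single 1 1) : Fin 2 →₀ ℕ)) 0 = d 0 + 1 := by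
      simp [Finsupp.add_apply, Finsupp.single_apply]
    have e1 : ((d + (Finsupp.single 0 1 + Finsupp.single 1 1) : Fin 2 →₀ ℕ)) 1 = d 1 + 1 := by
      simp [Finsupp.add_apply, Finsupp.single_apply]
    have e2 : (d + 0 : Fin 2 →₀ ℕ) = d := by simp
    rw [e0, e1, e2, mu_rec1, mul_one, smul_smul, ← smul_smul, sub_self]

lemma lam_mul_g2 (F a : A) (hn : 0 < n) (p : MvPolynomial (Fin 2) A) :
    lam F a n (p * (X 0 ^ n + X 1 ^ n - C (2 * a))) = 0 := by
  induction p using MvPolynomial.induction_on' with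
  | add p q hp hq => rw [add_mul, map_add, hp, hq, add_zero]
  | monomial d c =>
    rw [mul_sub, mul_add, MvPolynomial.X_pow_eq_monomial, MvPolynomial.X_pow_eq_monomial,
      MvPolynomial.C_apply, MvPolynomial.monomial_mul, MvPolynomial.monomial_mul,
      MvPolynomial.monomial_mul, map_sub, map_add, lam_monomial, lam_monomial, lam_monomial]
    have e00 : ((d + Finsupp.single 0 n : Fin 2 →₀ ℕ)) 0 = d 0 + n := by
      simp [Finsupp.add_apply, Finsupp.single_apply]
    have e01 : ((d + Finsupp.single 0 n : Fin 2 →₀ ℕ)) 1 = d 1 := by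
      simp [Finsupp.add_apply, Finsupp.single_apply]
    have e10 : ((d + Finsupp.single 1 n : Fin 2 →₀ ℕ)) 0 = d 0 := by
      simp [Finsupp.add_apply, Finsupp.single_apply]
    have e11 : ((d + Finsupp.single 1 n : Fin 2 →₀ ℕ)) 1 = d 1 + n := by
      simp [Finsupp.add_apply, Finsupp.single_apply]
    have e2 : (d + 0 : Fin 2 →₀ ℕ) = d := by simp
    rw [e00, e01, e10, e11, e2, ← smul_add, mu_rec2 hn, smul_smul, mul_one, sub_self]

lemma lam_ideal (F a : A) (hn : 0 < n) {x : MvPolynomial (Fin 2) A}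
    (hx : x ∈ dihedralIdeal A n F a) : lam F a n x = 0 := by
  rw [dihedralIdeal, Ideal.mem_span_pair] at hx
  obtain ⟨p, q, rfl⟩ := hx
  rw [map_add, lam_mul_g1, lam_mul_g2 F a hn, add_zero]

lemma mu_zero_zero : mu F a n 0 0 = (1, 0) := by
  rw [mu, if_pos le_rfl, Nat.sub_zero, cU_zero, pow_zero, one_smul]

lemma mu_n_zero (hn : 0 < n) : mu F a n n 0 = (2 * a, -1) := by
  rw [mu, if_pos (Nat.zero_le n), Nat.sub_zero, cU_n hn, pow_zero, one_smul]

lemma mu_zero_n (hn : 0 < n) : mu F a n 0 n = (0, 1) := by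
  rw [mu, if_neg (by omega), Nat.sub_zero, cV_n hn, pow_zero, one_smul]

lemma indep (F a : A) (hn : 0 < n) (htwo : ∀ x : A, 2 * x = 0 → x = 0)
    {c₀ c₁ : A}
    (h : (C c₀ + C c₁ * (X 0 ^ n - X 1 ^ n) : MvPolynomial (Fin 2) A)
      ∈ dihedralIdeal A n F a) : c₀ = 0 ∧ c₁ = 0 := by
  have hl := lam_ideal F a hn h
  have expand : (C c₀ + C c₁ * (X 0 ^ n - X 1 ^ n) : MvPolynomial (Fin 2) A)
      = monomial 0 c₀ + (monomial (Finsupp.single 0 n) c₁ - monomial (Finsupp.single 1 n) c₁) := by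
    rw [mul_sub, MvPolynomial.X_pow_eq_monomial, MvPolynomial.X_pow_eq_monomial,
      MvPolynomial.C_apply, MvPolynomial.C_apply, MvPolynomial.monomial_mul,
      MvPolynomial.monomial_mul, zero_add, zero_add]
    simp only [mul_one]
  rw [expand, map_add, map_sub, lam_monomial, lam_monomial, lam_monomial] at hl
  have s00 : (Finsupp.single (0:Fin 2) n) 0 = n := Finsupp.single_eq_same
  have s01 : (Finsupp.single (0:Fin 2) n) 1 = 0 := Finsupp.single_eq_of_ne (by decide)
  have s10 : (Finsupp.single (1:Fin 2) n) 0 = 0 := Finsupp.single_eq_of_ne (by decide)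
  have s11 : (Finsupp.single (1:Fin 2) n) 1 = n := Finsupp.single_eq_same
  have z0 : ((0 : Fin 2 →₀ ℕ)) 0 = 0 := rfl
  have z1 : ((0 : Fin 2 →₀ ℕ)) 1 = 0 := rfl
  rw [s00, s01, s10, s11, z0, z1, mu_zero_zero, mu_n_zero hn, mu_zero_n hn] at hl
  have h1 := congrArg Prod.fst hl
  have h2 := congrArg Prod.snd hl
  simp only [Prod.smul_fst, Prod.smul_snd, Prod.fst_add, Prod.snd_add, Prod.fst_sub,
    Prod.snd_sub, smul_eq_mul, Prod.fst_zero, Prod.snd_zero] at h1 h2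
  have hc1 : c₁ = 0 := htwo _ (by linear_combination -h2)
  have hc0 : c₀ = 0 := by rw [hc1] at h1; linear_combination h1
  exact ⟨hc0, hc1⟩

end DihedralAux

section Test
variable (A : Type) [CommRing A] [Algebra ℂ A] (n : ℕ) (F a : A)

example : Algebra ℂ (DihedralCoverRing A n F a) := inferInstance
example : IsScalarTower ℂ A (DihedralCoverRing A n F a) := inferInstance

open MvPolynomial
lemma mk_C (x : A) : algebraMap A (DihedralCoverRing A n F a) x
    = Ideal.Quotient.mk (dihedralIdeal A n F a) (C x) := by
  rw [IsScalarTower.algebraMap_apply A (MvPolynomial (Fin 2) A) (DihedralCoverRing A n F a),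
    MvPolynomial.algebraMap_eq, Ideal.Quotient.algebraMap_eq]

lemma rel1 : uElt A n F a * vElt A n F a = algebraMap A (DihedralCoverRing A n F a) F := by
  rw [mk_C, uElt, vElt, ← map_mul, ← sub_eq_zero, ← map_sub, Ideal.Quotient.eq_zero_iff_mem]
  exact Ideal.subset_span (Set.mem_insert _ _)

lemma rel2 : uElt A n F a ^ n + vElt A n F a ^ n
    = algebraMap A (DihedralCoverRing A n F a) (2 * a) := by
  rw [mk_C, uElt, vElt, ← map_pow, ← map_pow, ← map_add, ← sub_eq_zero, ← map_sub,
    Ideal.Quotient.eq_zero_iff_mem]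
  exact Ideal.subset_span (Set.mem_insert_of_mem _ rfl)

lemma zsq : (uElt A n F a ^ n - vElt A n F a ^ n) ^ 2
    = algebraMap A (DihedralCoverRing A n F a) (4 * (a ^ 2 - F ^ n)) := by
  have h : (uElt A n F a ^ n - vElt A n F a ^ n) ^ 2
      = (uElt A n F a ^ n + vElt A n F a ^ n) ^ 2 - 4 * (uElt A n F a * vElt A n F a) ^ n := by
    rw [mul_pow]; ring
  rw [h, rel1, rel2, ← map_pow, ← map_pow,
    show ((4 : DihedralCoverRing A n F a) = algebraMap A _ 4) from (map_ofNat _ 4).symm,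
    ← map_mul, ← map_sub]
  congr 1
  ring

lemma htwoA (x : A) (h : 2 * x = 0) : x = 0 := by
  have h2 : (2 : A) = algebraMap ℂ A 2 := (map_ofNat _ 2).symm
  calc x = (algebraMap ℂ A 2⁻¹ * 2) * x := by
            rw [h2, ← map_mul]; norm_num
    _ = algebraMap ℂ A 2⁻¹ * (2 * x) := by ring
    _ = 0 := by rw [h, mul_zero]

lemma indepB (hn : 0 < n) (s t : A)
    (h : algebraMap A (DihedralCoverRing A n F a) s
      + algebraMap A (DihedralCoverRing A n F a) t * (uElt A n F a ^ n - vElt A n F a ^ n)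
      = 0) : s = 0 ∧ t = 0 := by
  have hmem : (C s + C t * (X 0 ^ n - X 1 ^ n) : MvPolynomial (Fin 2) A)
      ∈ dihedralIdeal A n F a := by
    rw [← Ideal.Quotient.eq_zero_iff_mem, map_add, map_mul, map_sub, map_pow, map_pow]
    rw [mk_C, mk_C] at h
    exact h
  exact DihedralAux.indep F a hn (htwoA A) hmem


set_option maxHeartbeats 1000000 in
lemma spanB (hn : 0 < n) (ζ : ℂ) (hζ : IsPrimitiveRoot ζ n)
    (σ : DihedralCoverRing A n F a ≃ₐ[A] DihedralCoverRing A n F a)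
    (hσu : σ (uElt A n F a) = algebraMap ℂ (DihedralCoverRing A n F a) ζ * uElt A n F a)
    (hσv : σ (vElt A n F a) = algebraMap ℂ (DihedralCoverRing A n F a) ζ⁻¹ * vElt A n F a)
    (x : DihedralCoverRing A n F a) (hx : σ x = x) :
    x ∈ Submodule.span A ({1, uElt A n F a ^ n - vElt A n F a ^ n} :
      Set (DihedralCoverRing A n F a)) := by
  set u := uElt A n F a with hu
  set v := vElt A n F a with hv
  set z := u ^ n - v ^ n with hz
  set W := Submodule.span A ({1, z} : Set (DihedralCoverRing A n F a)) with hWdef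
  have h1W : (1 : (DihedralCoverRing A n F a)) ∈ W := Submodule.subset_span (Set.mem_insert _ _)
  have hzW : z ∈ W := Submodule.subset_span (Set.mem_insert_of_mem _ rfl)
  have halgC : ∀ (c : ℂ) (y : (DihedralCoverRing A n F a)), y ∈ W → algebraMap ℂ (DihedralCoverRing A n F a) c * y ∈ W := by
    intro c y hy
    rw [IsScalarTower.algebraMap_apply ℂ A (DihedralCoverRing A n F a), ← Algebra.smul_def]
    exact W.smul_mem _ hy
  have halgA : ∀ (c : A) (y : (DihedralCoverRing A n F a)), y ∈ W → algebraMap A (DihedralCoverRing A n F a) c * y ∈ W := by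
    intro c y hy
    rw [← Algebra.smul_def]
    exact W.smul_mem _ hy
  have h2B : (2 : (DihedralCoverRing A n F a)) = algebraMap ℂ (DihedralCoverRing A n F a) 2 := (map_ofNat _ 2).symm
  have hhalf : (2 : (DihedralCoverRing A n F a)) * algebraMap ℂ (DihedralCoverRing A n F a) 2⁻¹ = 1 := by
    rw [h2B, ← map_mul]; norm_num
  have hcancel2 : ∀ y y' : (DihedralCoverRing A n F a), 2 * y = 2 * y' → y = y' := by
    intro y y' hyy
    calc y = (algebraMap ℂ (DihedralCoverRing A n F a) 2⁻¹ * 2) * y := by rw [mul_comm _ (2:(DihedralCoverRing A n F a)), hhalf, one_mul]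
    _ = algebraMap ℂ (DihedralCoverRing A n F a) 2⁻¹ * (2 * y) := by ring
    _ = algebraMap ℂ (DihedralCoverRing A n F a) 2⁻¹ * (2 * y') := by rw [hyy]
    _ = (algebraMap ℂ (DihedralCoverRing A n F a) 2⁻¹ * 2) * y' := by ring
    _ = y' := by rw [mul_comm _ (2:(DihedralCoverRing A n F a)), hhalf, one_mul]
  have hun : u ^ n = algebraMap A (DihedralCoverRing A n F a) a + algebraMap ℂ (DihedralCoverRing A n F a) 2⁻¹ * z := by
    apply hcancel2
    calc (2:(DihedralCoverRing A n F a)) * u ^ n = (u ^ n + v ^ n) + z := by rw [hz]; ring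
    _ = algebraMap A (DihedralCoverRing A n F a) (2 * a) + z := by rw [rel2 A n F a]
    _ = 2 * (algebraMap A (DihedralCoverRing A n F a) a + algebraMap ℂ (DihedralCoverRing A n F a) 2⁻¹ * z) := by
          rw [map_mul, show (algebraMap A (DihedralCoverRing A n F a) 2 = (2:(DihedralCoverRing A n F a))) from map_ofNat _ 2, mul_add]
          congr 1
          rw [← mul_assoc, hhalf, one_mul]
  have hvn : v ^ n = algebraMap A (DihedralCoverRing A n F a) a - algebraMap ℂ (DihedralCoverRing A n F a) 2⁻¹ * z := by
    apply hcancel2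
    calc (2:(DihedralCoverRing A n F a)) * v ^ n = (u ^ n + v ^ n) - z := by rw [hz]; ring
    _ = algebraMap A (DihedralCoverRing A n F a) (2 * a) - z := by rw [rel2 A n F a]
    _ = 2 * (algebraMap A (DihedralCoverRing A n F a) a - algebraMap ℂ (DihedralCoverRing A n F a) 2⁻¹ * z) := by
          rw [map_mul, show (algebraMap A (DihedralCoverRing A n F a) 2 = (2:(DihedralCoverRing A n F a))) from map_ofNat _ 2, mul_sub]
          congr 1
          rw [← mul_assoc, hhalf, one_mul]
  have hunW : u ^ n ∈ W := by
    rw [hun]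
    exact W.add_mem (by have := halgA a 1 h1W; rwa [mul_one] at this) (halgC _ _ hzW)
  have hvnW : v ^ n ∈ W := by
    rw [hvn]
    exact W.sub_mem (by have := halgA a 1 h1W; rwa [mul_one] at this) (halgC _ _ hzW)
  have hz2W : z * z ∈ W := by
    have hzz : z * z = algebraMap A (DihedralCoverRing A n F a) (4 * (a ^ 2 - F ^ n)) := by
      rw [← pow_two]; exact zsq A n F a
    rw [hzz]
    have := halgA (4 * (a ^ 2 - F ^ n)) 1 h1W
    rwa [mul_one] at this
  have hclosU : ∀ y ∈ W, u ^ n * y ∈ W := by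
    intro y hy
    rw [hWdef, Submodule.mem_span_pair] at hy
    obtain ⟨c, d, rfl⟩ := hy
    rw [mul_add, mul_smul_comm, mul_smul_comm, mul_one]
    refine W.add_mem (W.smul_mem _ hunW) (W.smul_mem _ ?_)
    rw [hun, add_mul]
    refine W.add_mem (halgA _ _ hzW) ?_
    rw [mul_assoc]
    exact halgC _ _ hz2W
  have hclosV : ∀ y ∈ W, v ^ n * y ∈ W := by
    intro y hy
    rw [hWdef, Submodule.mem_span_pair] at hy
    obtain ⟨c, d, rfl⟩ := hy
    rw [mul_add, mul_smul_comm, mul_smul_comm, mul_one]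
    refine W.add_mem (W.smul_mem _ hvnW) (W.smul_mem _ ?_)
    rw [hvn, sub_mul]
    refine W.sub_mem (halgA _ _ hzW) ?_
    rw [mul_assoc]
    exact halgC _ _ hz2W
  have hpowU : ∀ q : ℕ, u ^ (n * q) ∈ W := by
    intro q
    induction q with
    | zero => simpa using h1W
    | succ q ih =>
      have e : u ^ (n * (q + 1)) = u ^ n * u ^ (n * q) := by
        rw [← pow_add]; congr 1; ring
      rw [e]; exact hclosU _ ih
  have hpowV : ∀ q : ℕ, v ^ (n * q) ∈ W := by
    intro q
    induction q with
    | zero => simpa using h1W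
    | succ q ih =>
      have e : v ^ (n * (q + 1)) = v ^ n * v ^ (n * q) := by
        rw [← pow_add]; congr 1; ring
      rw [e]; exact hclosV _ ih
  have hζne : ζ ≠ 0 := hζ.ne_zero (by omega)
  have hmonW : ∀ i j : ℕ, ζ ^ i * (ζ⁻¹) ^ j = 1 → u ^ i * v ^ j ∈ W := by
    intro i j hij
    have hij' : ζ ^ i = ζ ^ j := by
      rw [inv_pow, ← div_eq_mul_inv, div_eq_one_iff_eq (pow_ne_zero _ hζne)] at hij
      exact hij
    rcases le_total j i with hle | hle
    · have hpow1 : ζ ^ (i - j) = 1 := by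
        have h' : ζ ^ (i - j) * ζ ^ j = 1 * ζ ^ j := by
          rw [← pow_add, Nat.sub_add_cancel hle, one_mul, hij']
        exact mul_right_cancel₀ (pow_ne_zero _ hζne) h'
      obtain ⟨q, hq⟩ := (hζ.pow_eq_one_iff_dvd _).1 hpow1
      have e : u ^ i * v ^ j = algebraMap A (DihedralCoverRing A n F a) (F ^ j) * u ^ (n * q) := by
        calc u ^ i * v ^ j = u ^ (i - j) * (u * v) ^ j := by
              rw [mul_pow, ← mul_assoc, ← pow_add, Nat.sub_add_cancel hle]
        _ = u ^ (n * q) * algebraMap A (DihedralCoverRing A n F a) (F ^ j) := by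
              rw [rel1 A n F a, ← map_pow, hq]
        _ = algebraMap A (DihedralCoverRing A n F a) (F ^ j) * u ^ (n * q) := by ring
      rw [e]
      exact halgA _ _ (hpowU q)
    · have hpow1 : ζ ^ (j - i) = 1 := by
        have h' : ζ ^ (j - i) * ζ ^ i = 1 * ζ ^ i := by
          rw [← pow_add, Nat.sub_add_cancel hle, one_mul, hij']
        exact mul_right_cancel₀ (pow_ne_zero _ hζne) h'
      obtain ⟨q, hq⟩ := (hζ.pow_eq_one_iff_dvd _).1 hpow1
      have e : u ^ i * v ^ j = algebraMap A (DihedralCoverRing A n F a) (F ^ i) * v ^ (n * q) := by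
        calc u ^ i * v ^ j = (u * v) ^ i * v ^ (j - i) := by
              rw [mul_pow, mul_assoc, ← pow_add]
              congr 2
              omega
        _ = algebraMap A (DihedralCoverRing A n F a) (F ^ i) * v ^ (n * q) := by
              rw [rel1 A n F a, ← map_pow, hq]
      rw [e]
      exact halgA _ _ (hpowV q)
  have hσpu : ∀ k : ℕ, (σ ^ k) u = algebraMap ℂ (DihedralCoverRing A n F a) (ζ ^ k) * u := by
    intro k
    induction k with
    | zero => simp
    | succ k ih =>
      rw [pow_succ, AlgEquiv.mul_apply, hσu, map_mul, ih]
      have hc : (σ ^ k) (algebraMap ℂ (DihedralCoverRing A n F a) ζ) = algebraMap ℂ (DihedralCoverRing A n F a) ζ := by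
        rw [IsScalarTower.algebraMap_apply ℂ A (DihedralCoverRing A n F a)]
        exact (σ ^ k).commutes _
      rw [hc, ← mul_assoc, ← map_mul, ← pow_succ']
  have hσpv : ∀ k : ℕ, (σ ^ k) v = algebraMap ℂ (DihedralCoverRing A n F a) (ζ⁻¹ ^ k) * v := by
    intro k
    induction k with
    | zero => simp
    | succ k ih =>
      rw [pow_succ, AlgEquiv.mul_apply, hσv, map_mul, ih]
      have hc : (σ ^ k) (algebraMap ℂ (DihedralCoverRing A n F a) ζ⁻¹) = algebraMap ℂ (DihedralCoverRing A n F a) ζ⁻¹ := by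
        rw [IsScalarTower.algebraMap_apply ℂ A (DihedralCoverRing A n F a)]
        exact (σ ^ k).commutes _
      rw [hc, ← mul_assoc, ← map_mul, ← pow_succ']
  have hT : ∀ y : (DihedralCoverRing A n F a), (∑ k ∈ Finset.range n, (σ ^ k) y) ∈ W := by
    intro y
    obtain ⟨P, rfl⟩ := Ideal.Quotient.mk_surjective y
    induction P using MvPolynomial.induction_on' with
    | add p q hp hq =>
      have e : ∀ k : ℕ, (σ ^ k) ((Ideal.Quotient.mk (dihedralIdeal A n F a)) (p + q))
          = (σ ^ k) ((Ideal.Quotient.mk (dihedralIdeal A n F a)) p)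
            + (σ ^ k) ((Ideal.Quotient.mk (dihedralIdeal A n F a)) q) := by
        intro k; rw [map_add, map_add]
      rw [Finset.sum_congr rfl fun k _ => e k, Finset.sum_add_distrib]
      exact W.add_mem hp hq
    | monomial d c =>
      have hmon : (Ideal.Quotient.mk (dihedralIdeal A n F a)) (monomial d c)
          = algebraMap A (DihedralCoverRing A n F a) c * (u ^ d 0 * v ^ d 1) := by
        have hd0 : d = Finsupp.single 0 (d 0) + Finsupp.single 1 (d 1) := by
          ext i
          fin_cases i <;>
            simp [Finsupp.add_apply, Finsupp.single_apply]
        have hd : (C c * X 0 ^ d 0 * X 1 ^ d 1 : MvPolynomial (Fin 2) A)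
            = monomial d c := by
          rw [X_pow_eq_monomial, X_pow_eq_monomial, C_apply, monomial_mul, monomial_mul]
          rw [zero_add, ← hd0]
          simp
        rw [← hd, map_mul, map_mul, ← mk_C A n F a]
        rw [hu, hv, uElt, vElt, map_pow, map_pow, mul_assoc]
      set w : ℂ := ζ ^ d 0 * ζ⁻¹ ^ d 1 with hwdef
      have hterm : ∀ k : ℕ, (σ ^ k) (algebraMap A (DihedralCoverRing A n F a) c * (u ^ d 0 * v ^ d 1))
          = algebraMap A (DihedralCoverRing A n F a) c * (algebraMap ℂ (DihedralCoverRing A n F a) (w ^ k) * (u ^ d 0 * v ^ d 1)) := by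
        intro k
        rw [map_mul, map_mul, map_pow, map_pow, hσpu, hσpv, (σ ^ k).commutes c]
        rw [mul_pow, mul_pow, ← map_pow, ← map_pow]
        have e : (ζ ^ k) ^ d 0 * (ζ⁻¹ ^ k) ^ d 1 = w ^ k := by
          rw [hwdef, mul_pow, ← pow_mul, ← pow_mul, ← pow_mul, ← pow_mul,
            Nat.mul_comm k (d 0), Nat.mul_comm k (d 1)]
        rw [← e, map_mul]
        ring
      rw [hmon, Finset.sum_congr rfl fun k _ => hterm k, ← Finset.mul_sum, ← Finset.sum_mul,
        ← map_sum]
      by_cases hw : w = 1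
      · have hs : (∑ k ∈ Finset.range n, w ^ k) = (n : ℂ) := by
          rw [hw]; simp
        rw [hs]
        exact halgA _ _ (halgC _ _ (hmonW (d 0) (d 1) hw))
      · have hwn : w ^ n = 1 := by
          have e1 : (ζ ^ d 0) ^ n = 1 := by
            rw [← pow_mul, Nat.mul_comm, pow_mul, hζ.pow_eq_one, one_pow]
          have e2 : (ζ⁻¹ ^ d 1) ^ n = 1 := by
            rw [← pow_mul, Nat.mul_comm, pow_mul, inv_pow, hζ.pow_eq_one, inv_one, one_pow]
          rw [hwdef, mul_pow, e1, e2, mul_one]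
        have hs : (∑ k ∈ Finset.range n, w ^ k) = 0 := by
          rw [geom_sum_eq hw, hwn, sub_self, zero_div]
        rw [hs, map_zero, zero_mul, mul_zero]
        exact W.zero_mem
  have hfix : ∀ k : ℕ, (σ ^ k) x = x := by
    intro k
    induction k with
    | zero => simp
    | succ k ih => rw [pow_succ, AlgEquiv.mul_apply, hx, ih]
  have hsum : (∑ k ∈ Finset.range n, (σ ^ k) x) = n • x := by
    rw [Finset.sum_congr rfl fun k _ => hfix k, Finset.sum_const, Finset.card_range]
  have hnx : (n • x : (DihedralCoverRing A n F a)) ∈ W := hsum ▸ hT x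
  have hxeq : x = algebraMap ℂ (DihedralCoverRing A n F a) (n : ℂ)⁻¹ * (n • x) := by
    rw [nsmul_eq_mul, ← mul_assoc,
      show ((n : (DihedralCoverRing A n F a)) = algebraMap ℂ (DihedralCoverRing A n F a) (n : ℂ)) from (map_natCast _ n).symm, ← map_mul,
      inv_mul_cancel₀ (show (n : ℂ) ≠ 0 from Nat.cast_ne_zero.2 (by omega))]
    simp
  rw [hxeq]
  exact halgC _ _ hnx


lemma mem_fixed_iff (σ : DihedralCoverRing A n F a ≃ₐ[A] DihedralCoverRing A n F a)
    (x : DihedralCoverRing A n F a) :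
    x ∈ fixedSubalgebra A n F a σ ↔ σ x = x := by
  rw [fixedSubalgebra, AlgHom.mem_equalizer]
  simp

end Test

/-!
STATEMENT 10: Let `A` be a commutative algebra over `ℂ`, let `n ≥ 1` be an integer,
`F, a ∈ A`, and let `ζ ∈ ℂ` be a primitive `n`-th root of unity.  Let
`B := A[u, v]/(uv − F, uⁿ + vⁿ − 2a)`, and let `σ` be the `A`-algebra automorphism of `B`
determined by `σ(u) = ζ·u`, `σ(v) = ζ⁻¹·v`.  Then the subalgebra `B^σ` of `σ`-invariant
elements of `B` is a free `A`-module with basis `{1, uⁿ − vⁿ}`, and in `B` one has the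
identity `(uⁿ − vⁿ)² = 4·(a² − Fⁿ)`.
-/

set_option synthInstance.maxHeartbeats 400000 in
set_option maxHeartbeats 2000000 in
theorem dihedralCoverRing_sigma_invariants
    (A : Type) [CommRing A] [Algebra ℂ A] (n : ℕ) (hn : 1 ≤ n) (F a : A)
    (ζ : ℂ) (hζ : IsPrimitiveRoot ζ n)
    (σ : DihedralCoverRing A n F a ≃ₐ[A] DihedralCoverRing A n F a)
    (hσu : σ (uElt A n F a) =
      algebraMap ℂ (DihedralCoverRing A n F a) ζ * uElt A n F a)
    (hσv : σ (vElt A n F a) =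
      algebraMap ℂ (DihedralCoverRing A n F a) ζ⁻¹ * vElt A n F a) :
    (∃ b : Module.Basis (Fin 2) A (fixedSubalgebra A n F a σ),
      (b 0 : DihedralCoverRing A n F a) = 1 ∧
      (b 1 : DihedralCoverRing A n F a) = uElt A n F a ^ n - vElt A n F a ^ n) ∧
    (uElt A n F a ^ n - vElt A n F a ^ n) ^ 2 =
      algebraMap A (DihedralCoverRing A n F a) (4 * (a ^ 2 - F ^ n)) := by
  have hn' : 0 < n := hn
  refine ⟨?_, zsq A n F a⟩
  have hmem1 : (1 : DihedralCoverRing A n F a) ∈ fixedSubalgebra A n F a σ := by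
    rw [mem_fixed_iff]
    exact map_one σ
  have hmemz : (uElt A n F a ^ n - vElt A n F a ^ n) ∈ fixedSubalgebra A n F a σ := by
    rw [mem_fixed_iff, map_sub, map_pow, map_pow, hσu, hσv, mul_pow, mul_pow,
      ← map_pow, ← map_pow, hζ.pow_eq_one, inv_pow, hζ.pow_eq_one, inv_one,
      map_one, one_mul, one_mul]
  set s0 : fixedSubalgebra A n F a σ := ⟨1, hmem1⟩ with hs0
  set s1 : fixedSubalgebra A n F a σ := ⟨uElt A n F a ^ n - vElt A n F a ^ n, hmemz⟩ with hs1
  have hli : LinearIndependent A ![s0, s1] := by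
    rw [LinearIndependent.pair_iff]
    intro s t hst
    have hst' := congrArg (Subtype.val) hst
    simp only [Subalgebra.coe_add, SetLike.val_smul, hs0, hs1, ZeroMemClass.coe_zero] at hst'
    have heq : algebraMap A (DihedralCoverRing A n F a) s
        + algebraMap A (DihedralCoverRing A n F a) t
          * (uElt A n F a ^ n - vElt A n F a ^ n) = 0 := by
      rw [Algebra.algebraMap_eq_smul_one, Algebra.algebraMap_eq_smul_one, smul_mul_assoc,
        one_mul]
      exact hst'
    exact indepB A n F a hn' s t heq
  have hsp : ⊤ ≤ Submodule.span A (Set.range ![s0, s1]) := by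
    intro x _
    have hxfix : σ (x : DihedralCoverRing A n F a) = (x : DihedralCoverRing A n F a) :=
      (mem_fixed_iff A n F a σ _).1 x.2
    have hxW := spanB A n F a hn' ζ hζ σ hσu hσv _ hxfix
    rw [Submodule.mem_span_pair] at hxW
    obtain ⟨c, d, hcd⟩ := hxW
    have hr : Set.range ![s0, s1] = {s0, s1} := by
      ext y
      simp only [Set.mem_range, Fin.exists_fin_two, Matrix.cons_val_zero, Matrix.cons_val_one,
        Matrix.head_cons, Set.mem_insert_iff, Set.mem_singleton_iff]
      tauto
    rw [hr, Submodule.mem_span_pair]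
    refine ⟨c, d, ?_⟩
    apply Subtype.ext
    simp only [Subalgebra.coe_add, SetLike.val_smul, hs0, hs1]
    exact hcd
  refine ⟨Module.Basis.mk hli hsp, ?_, ?_⟩
  · rw [Module.Basis.coe_mk]
    rfl
  · rw [Module.Basis.coe_mk]
    rfl
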